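/- Assume additionally that P(w > 0) = 1. Define, for each n ≥ 1, the conditional least squares estimator ρ̂_n := (n Σ_{k=1}^{n} X_k X_{k-1} − (Σ_{k=1}^{n} X_k)(Σ_{k=1}^{n} X_{k-1})) / (n Σ_{k=1}^{n} X_{k-1}² − (Σ_{k=1}^{n} X_{k-1})²), where the quotient is assigned the value 0 whenever the denominator vanishes. Then ρ̂_n → e^{B} P-almost surely and log(ρ̂_n) → B P-almost surely as n → ∞. -/

import Mathlib

open MeasureTheory Filter Real

/-- The conditional least squares estimator of `ρ = e^B` based on observations
`X 0, X 1, …, X n` (with the supercritical CBI indexing `Σ_{k=1}^n X_{k-1} X_k` etc.),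
where the quotient is `0` whenever the denominator vanishes (Lean's convention for
division by zero). -/
noncomputable def rhoHat {Ω : Type*} (X : ℕ → Ω → ℝ) (n : ℕ) (ω : Ω) : ℝ :=
  ((n : ℝ) * ∑ k ∈ Finset.range n, X (k + 1) ω * X k ω
      - (∑ k ∈ Finset.range n, X (k + 1) ω) * (∑ k ∈ Finset.range n, X k ω)) /
    ((n : ℝ) * ∑ k ∈ Finset.range n, (X k ω) ^ 2 - (∑ k ∈ Finset.range n, X k ω) ^ 2)

private lemma geom_weighted_zero {r : ℝ} (hr : 1 < r) {d : ℕ → ℝ}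
    (hd : Tendsto d atTop (nhds 0)) :
    Tendsto (fun n : ℕ => (∑ k ∈ Finset.range n, d k * r ^ k) / r ^ n) atTop (nhds 0) := by
  have hr0 : (0:ℝ) < r := one_pos.trans hr
  have hr1 : (0:ℝ) < r - 1 := sub_pos.mpr hr
  rw [NormedAddCommGroup.tendsto_nhds_zero]
  intro ε hε
  set ε' := ε * (r - 1) / 2 with hε'def
  have hε' : 0 < ε' := by positivity
  rw [Metric.tendsto_atTop] at hd
  obtain ⟨N, hN⟩ := hd ε' hε'
  have hNabs : ∀ k, N ≤ k → |d k| ≤ ε' := by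
    intro k hk
    have := hN k hk
    rw [Real.dist_eq, sub_zero] at this
    exact this.le
  set C := ∑ k ∈ Finset.range N, |d k| * r ^ k with hC
  have hCtend : Tendsto (fun n : ℕ => C / r ^ n) atTop (nhds 0) := by
    have h1 : Tendsto (fun n : ℕ => r⁻¹ ^ n) atTop (nhds 0) :=
      tendsto_pow_atTop_nhds_zero_of_lt_one (by positivity) (inv_lt_one_of_one_lt₀ hr)
    have h2 := h1.const_mul C
    simpa [div_eq_mul_inv, inv_pow] using h2
  filter_upwards [eventually_ge_atTop N,
    hCtend.eventually (gt_mem_nhds (show (0:ℝ) < ε/2 by linarith))] with n hn hCn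
  have hrn : (0:ℝ) < r ^ n := pow_pos hr0 n
  have hbound : |∑ k ∈ Finset.range n, d k * r ^ k| ≤ C + ε' * (r ^ n / (r - 1)) := by
    have step1 : |∑ k ∈ Finset.range n, d k * r ^ k|
        ≤ ∑ k ∈ Finset.range n, |d k| * r ^ k := by
      refine (Finset.abs_sum_le_sum_abs _ _).trans ?_
      apply Finset.sum_le_sum
      intro k _
      rw [abs_mul, abs_of_nonneg (pow_nonneg hr0.le k)]
    have step2 : ∑ k ∈ Finset.range n, |d k| * r ^ k
        = C + ∑ k ∈ Finset.Ico N n, |d k| * r ^ k := by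
      rw [hC, Finset.sum_range_add_sum_Ico _ hn]
    have step3 : ∑ k ∈ Finset.Ico N n, |d k| * r ^ k
        ≤ ∑ k ∈ Finset.Ico N n, ε' * r ^ k := by
      apply Finset.sum_le_sum
      intro k hk
      exact mul_le_mul_of_nonneg_right (hNabs k (Finset.mem_Ico.mp hk).1)
        (pow_nonneg hr0.le k)
    have step4 : ∑ k ∈ Finset.Ico N n, r ^ k ≤ r ^ n / (r - 1) := by
      have h1 : ∑ k ∈ Finset.Ico N n, r ^ k ≤ ∑ k ∈ Finset.range n, r ^ k := by
        rw [Finset.range_eq_Ico]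
        exact Finset.sum_le_sum_of_subset_of_nonneg
          (Finset.Ico_subset_Ico (Nat.zero_le _) le_rfl)
          (fun k _ _ => pow_nonneg hr0.le k)
      have h2 : ∑ k ∈ Finset.range n, r ^ k = (r ^ n - 1) / (r - 1) :=
        geom_sum_eq (ne_of_gt hr) n
      have h3 : (r ^ n - 1) / (r - 1) ≤ r ^ n / (r - 1) :=
        div_le_div_of_nonneg_right (by linarith) hr1.le
      linarith [h1, h2 ▸ h1, h3, h2.le]
    calc |∑ k ∈ Finset.range n, d k * r ^ k|
        ≤ C + ∑ k ∈ Finset.Ico N n, |d k| * r ^ k := by rw [← step2]; exact step1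
      _ ≤ C + ε' * ∑ k ∈ Finset.Ico N n, r ^ k := by
          rw [← Finset.mul_sum] at step3; linarith
      _ ≤ C + ε' * (r ^ n / (r - 1)) := by
          have := mul_le_mul_of_nonneg_left step4 hε'.le
          linarith
  rw [Real.norm_eq_abs, abs_div, abs_of_pos hrn]
  have hmain : |∑ k ∈ Finset.range n, d k * r ^ k| / r ^ n
      ≤ C / r ^ n + ε / 2 := by
    have heq : (C + ε' * (r ^ n / (r - 1))) / r ^ n = C / r ^ n + ε / 2 := by
      rw [hε'def]
      field_simp
    rw [← heq]
    exact div_le_div_of_nonneg_right hbound hrn.le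
  linarith

private lemma geom_weighted {r : ℝ} (hr : 1 < r) {c : ℕ → ℝ} {L : ℝ}
    (hc : Tendsto c atTop (nhds L)) :
    Tendsto (fun n : ℕ => (∑ k ∈ Finset.range n, c k * r ^ k) / r ^ n) atTop
      (nhds (L / (r - 1))) := by
  have hr0 : (0:ℝ) < r := one_pos.trans hr
  have hr1 : (0:ℝ) < r - 1 := sub_pos.mpr hr
  have hd : Tendsto (fun k => c k - L) atTop (nhds 0) := by
    simpa using hc.sub_const L
  have h0 := geom_weighted_zero hr hd
  have hgeom : Tendsto (fun n : ℕ => L * ((r ^ n - 1) / (r - 1)) / r ^ n) atTop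
      (nhds (L / (r - 1))) := by
    have h1 : Tendsto (fun n : ℕ => L / (r - 1) - L / (r - 1) * r⁻¹ ^ n) atTop
        (nhds (L / (r - 1) - L / (r - 1) * 0)) :=
      tendsto_const_nhds.sub
        ((tendsto_pow_atTop_nhds_zero_of_lt_one (by positivity) (inv_lt_one_of_one_lt₀ hr)).const_mul _)
    rw [mul_zero, sub_zero] at h1
    refine h1.congr fun n => ?_
    have hrn : (r:ℝ) ^ n ≠ 0 := pow_ne_zero _ hr0.ne'
    field_simp
    rw [one_div, inv_pow, mul_assoc, sub_mul, inv_mul_cancel₀ hrn]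
    ring
  have key : ∀ n : ℕ, (∑ k ∈ Finset.range n, c k * r ^ k) / r ^ n
      = (∑ k ∈ Finset.range n, (c k - L) * r ^ k) / r ^ n
        + L * ((r ^ n - 1) / (r - 1)) / r ^ n := by
    intro n
    have hsum : ∑ k ∈ Finset.range n, c k * r ^ k
        = ∑ k ∈ Finset.range n, (c k - L) * r ^ k + L * ∑ k ∈ Finset.range n, r ^ k := by
      rw [Finset.mul_sum, ← Finset.sum_add_distrib]
      exact Finset.sum_congr rfl fun k _ => by ring
    rw [hsum, geom_sum_eq (ne_of_gt hr) n, add_div]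
  have := h0.add hgeom
  rw [zero_add] at this
  exact this.congr fun n => (key n).symm

private lemma rhoHat_tendsto_of_pos {B : ℝ} (hB : 0 < B) (x : ℕ → ℝ) {w : ℝ} (hw : 0 < w)
    (h : Tendsto (fun n : ℕ => Real.exp (-B * n) * x n) atTop (nhds w)) :
    Tendsto (fun n : ℕ =>
      ((n : ℝ) * ∑ k ∈ Finset.range n, x (k + 1) * x k
          - (∑ k ∈ Finset.range n, x (k + 1)) * (∑ k ∈ Finset.range n, x k)) /
        ((n : ℝ) * ∑ k ∈ Finset.range n, (x k) ^ 2 - (∑ k ∈ Finset.range n, x k) ^ 2))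
      atTop (nhds (Real.exp B)) := by
  set r := Real.exp B with hrdef
  have hr : 1 < r := by
    rw [hrdef]
    exact Real.one_lt_exp_iff.mpr hB
  have hr0 : (0:ℝ) < r := one_pos.trans hr
  have hr2 : 1 < r ^ 2 := one_lt_pow₀ hr two_ne_zero
  have hr21 : (0:ℝ) < r ^ 2 - 1 := sub_pos.mpr hr2
  set a : ℕ → ℝ := fun n => x n / r ^ n with hadef
  have ha : Tendsto a atTop (nhds w) := by
    refine h.congr fun n => ?_
    show Real.exp (-B * n) * x n = x n / r ^ n
    rw [hrdef, neg_mul, Real.exp_neg, mul_comm B (n : ℝ), Real.exp_nat_mul, inv_mul_eq_div]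
  have hx : ∀ k, x k = a k * r ^ k := by
    intro k
    rw [hadef]
    field_simp
  have haS : Tendsto (fun k => a (k + 1)) atTop (nhds w) := ha.comp (tendsto_add_atTop_nat 1)
  have hpow : ∀ n : ℕ, (r ^ 2) ^ n = (r ^ n) ^ 2 := fun n => by
    rw [← pow_mul, ← pow_mul, mul_comm]
  -- the four normalized limits
  have L1 : Tendsto (fun n : ℕ => (∑ k ∈ Finset.range n, x (k + 1) * x k) / (r ^ n) ^ 2)
      atTop (nhds (w * w * r / (r ^ 2 - 1))) := by
    have h1 := geom_weighted hr2 ((haS.mul ha).mul_const r)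
    refine h1.congr fun n => ?_
    rw [hpow]
    congr 1
    refine Finset.sum_congr rfl fun k _ => ?_
    rw [hx (k + 1), hx k]
    ring
  have L2 : Tendsto (fun n : ℕ => (∑ k ∈ Finset.range n, (x k) ^ 2) / (r ^ n) ^ 2)
      atTop (nhds (w * w / (r ^ 2 - 1))) := by
    have h1 := geom_weighted hr2 (ha.mul ha)
    refine h1.congr fun n => ?_
    rw [hpow]
    congr 1
    refine Finset.sum_congr rfl fun k _ => ?_
    rw [hx k]
    ring
  have L3 : Tendsto (fun n : ℕ => (∑ k ∈ Finset.range n, x k) / r ^ n)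
      atTop (nhds (w / (r - 1))) := by
    have h1 := geom_weighted hr ha
    refine h1.congr fun n => ?_
    congr 1
    exact Finset.sum_congr rfl fun k _ => (hx k).symm
  have L4 : Tendsto (fun n : ℕ => (∑ k ∈ Finset.range n, x (k + 1)) / r ^ n)
      atTop (nhds (w * r / (r - 1))) := by
    have h1 := geom_weighted hr (haS.mul_const r)
    refine h1.congr fun n => ?_
    congr 1
    refine Finset.sum_congr rfl fun k _ => ?_
    rw [hx (k + 1)]
    ring
  have hnat : Tendsto (fun n : ℕ => (n : ℝ)) atTop atTop := tendsto_natCast_atTop_atTop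
  -- numerator normalized
  have hnum : Tendsto (fun n : ℕ =>
      ((n : ℝ) * ∑ k ∈ Finset.range n, x (k + 1) * x k
        - (∑ k ∈ Finset.range n, x (k + 1)) * (∑ k ∈ Finset.range n, x k))
      / ((n : ℝ) * (r ^ n) ^ 2)) atTop (nhds (w * w * r / (r ^ 2 - 1))) := by
    have ht : Tendsto (fun n : ℕ =>
        (∑ k ∈ Finset.range n, x (k + 1)) / r ^ n * ((∑ k ∈ Finset.range n, x k) / r ^ n)
          / (n : ℝ)) atTop (nhds 0) := (L4.mul L3).div_atTop hnat
    have hc := L1.sub ht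
    rw [sub_zero] at hc
    refine Tendsto.congr' ?_ hc
    filter_upwards [eventually_ge_atTop 1] with n hn
    have hn0 : (n : ℝ) ≠ 0 := Nat.cast_ne_zero.mpr (by omega)
    have hrn : (r : ℝ) ^ n ≠ 0 := pow_ne_zero _ hr0.ne'
    field_simp
  -- denominator normalized
  have hden : Tendsto (fun n : ℕ =>
      ((n : ℝ) * ∑ k ∈ Finset.range n, (x k) ^ 2 - (∑ k ∈ Finset.range n, x k) ^ 2)
      / ((n : ℝ) * (r ^ n) ^ 2)) atTop (nhds (w * w / (r ^ 2 - 1))) := by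
    have ht : Tendsto (fun n : ℕ =>
        (∑ k ∈ Finset.range n, x k) / r ^ n * ((∑ k ∈ Finset.range n, x k) / r ^ n)
          / (n : ℝ)) atTop (nhds 0) := (L3.mul L3).div_atTop hnat
    have hc := L2.sub ht
    rw [sub_zero] at hc
    refine Tendsto.congr' ?_ hc
    filter_upwards [eventually_ge_atTop 1] with n hn
    have hn0 : (n : ℝ) ≠ 0 := Nat.cast_ne_zero.mpr (by omega)
    have hrn : (r : ℝ) ^ n ≠ 0 := pow_ne_zero _ hr0.ne'
    field_simp
  have hdenne : w * w / (r ^ 2 - 1) ≠ 0 := by positivity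
  have hfinal := hnum.div hden hdenne
  have hval : w * w * r / (r ^ 2 - 1) / (w * w / (r ^ 2 - 1)) = r := by
    have hw2 : w * w ≠ 0 := by positivity
    field_simp
  rw [hval] at hfinal
  refine Tendsto.congr' ?_ hfinal
  filter_upwards [eventually_ge_atTop 1] with n hn
  have hn0 : (n : ℝ) ≠ 0 := Nat.cast_ne_zero.mpr (by omega)
  have hrn : (r : ℝ) ^ n ≠ 0 := pow_ne_zero _ hr0.ne'
  have hc0 : (n : ℝ) * (r ^ n) ^ 2 ≠ 0 := by
    apply mul_ne_zero hn0
    positivity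
  exact div_div_div_cancel_right₀ hc0 _ _

theorem cls_estimator_strongly_consistent
    {Ω : Type*} [MeasurableSpace Ω] (P : Measure Ω) [IsProbabilityMeasure P]
    (B : ℝ) (hB : 0 < B)
    (X : ℕ → Ω → ℝ) (hXmeas : ∀ n, Measurable (X n)) (hXnonneg : ∀ n ω, 0 ≤ X n ω)
    (w : Ω → ℝ) (hwmeas : Measurable w)
    (hconv : ∀ᵐ ω ∂P,
      Tendsto (fun n : ℕ => Real.exp (-B * n) * X n ω) atTop (nhds (w ω)))
    (hwpos : P {ω | 0 < w ω} = 1) :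
    (∀ᵐ ω ∂P, Tendsto (fun n : ℕ => rhoHat X n ω) atTop (nhds (Real.exp B))) ∧
    (∀ᵐ ω ∂P, Tendsto (fun n : ℕ => Real.log (rhoHat X n ω)) atTop (nhds B)) := by
  have hwposae : ∀ᵐ ω ∂P, 0 < w ω := by
    rw [ae_iff]
    have hm : MeasurableSet {ω | 0 < w ω} := measurableSet_lt measurable_const hwmeas
    have hcompl : {a : Ω | ¬ 0 < w a} = {ω | 0 < w ω}ᶜ := rfl
    rw [hcompl, measure_compl hm (measure_ne_top _ _), hwpos, measure_univ, tsub_self]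
  have key : ∀ᵐ ω ∂P, Tendsto (fun n : ℕ => rhoHat X n ω) atTop (nhds (Real.exp B)) := by
    filter_upwards [hconv, hwposae] with ω h1 h2
    have := rhoHat_tendsto_of_pos hB (fun n => X n ω) h2 h1
    simpa [rhoHat] using this
  refine ⟨key, ?_⟩
  filter_upwards [key] with ω hω
  have := hω.log (Real.exp_ne_zero B)
  simpa [Real.log_exp] using this
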